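/- Let T be a finite tree and (T, Q) a tree-decomposition of an instance of problem GB, and let (X̂, λ̂) be a feasible solution of LP-GB. Then for every nonempty subtree T̃ of T (i.e., a nonempty connected subgraph of T), there exist an integer k ≥ 1, reals μ^1, …, μ^k with 0 < μ^ℓ ≤ 1 and Σ_{ℓ=1}^k μ^ℓ = 1, and vectors x^1, …, x^k ∈ {0,1}^{𝒱(T̃)}, where 𝒱(T̃) = ∪_{t ∈ V(T̃)} Q_t, such that: (a) for every 1 ≤ ℓ ≤ k and every constraint i with K[i] ⊆ Q_t for some t ∈ V(T̃), the restriction of x^ℓ to K[i] lies in S^i; and (b) for every t ∈ V(T̃) and every (Y, N) ∈ Ω_t, X̂[Y, N] = Σ_{ℓ=1}^k μ^ℓ · Π_{j∈Y} x^ℓ_j · Π_{j∈N} (1 − x^ℓ_j). -/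

import Mathlib

open Finset

/-- The real value of a Boolean (0 or 1). -/
def bval (b : Bool) : ℝ := if b then 1 else 0

/-- Restriction of a 0/1 vector on `Fin n` to the coordinates in `A`. -/
def restr {n : ℕ} (x : Fin n → Bool) (A : Finset (Fin n)) : {j // j ∈ A} → Bool :=
  fun j => x j.val

/-- GB-feasibility: the restriction of `x` to each constraint support `K i` lies in `Sc i`. -/
def GBFeas {n m : ℕ} (K : Fin m → Finset (Fin n))
    (Sc : ∀ i : Fin m, Set ({j // j ∈ K i} → Bool)) (x : Fin n → Bool) : Prop :=
  ∀ i, restr x (K i) ∈ Sc i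

/-- The intersection graph of a GB instance. -/
def interGraph {n m : ℕ} (K : Fin m → Finset (Fin n)) : SimpleGraph (Fin n) where
  Adj j k := j ≠ k ∧ ∃ i, j ∈ K i ∧ k ∈ K i
  symm := by
    constructor
    rintro j k ⟨hne, i, hj, hk⟩
    exact ⟨hne.symm, i, hk, hj⟩
  loopless := by
    constructor
    rintro j ⟨hne, -⟩
    exact hne rfl

/-- Tree-decomposition of a graph `H`: `T` is a finite tree, every vertex of `H` appears in a
set of bags inducing a (nonempty) connected subgraph of `T`, and each edge of `H` is contained
in some bag. -/
def IsTreeDecomp {V τ : Type} (H : SimpleGraph V) (T : SimpleGraph τ) (Q : τ → Finset V) : Prop :=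
  T.IsTree ∧ (∀ v : V, (T.induce {t | v ∈ Q t}).Connected) ∧
    (∀ u v : V, H.Adj u v → ∃ t, u ∈ Q t ∧ v ∈ Q t)

/-- `F t`: 0/1 vectors on `Q t` (canonically extended by `false` off `Q t`), satisfying every
constraint whose support is contained in `Q t`. -/
def Ffeas {n m : ℕ} {τ : Type} (K : Fin m → Finset (Fin n))
    (Sc : ∀ i : Fin m, Set ({j // j ∈ K i} → Bool)) (Q : τ → Finset (Fin n)) (t : τ) :
    Set (Fin n → Bool) :=
  {v | (∀ j, j ∉ Q t → v j = false) ∧ ∀ i, K i ⊆ Q t → restr v (K i) ∈ Sc i}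

/-- `Ω t`: pairs `(Y, N)` of disjoint subsets of `Q t` such that either `|Y| ≤ 1` and `N = ∅`,
or `(Y, N)` is a partition of `Q t ∩ Q t'` for some neighbor `t'` of `t` in `T`. -/
def Omega {n : ℕ} {τ : Type} (T : SimpleGraph τ) (Q : τ → Finset (Fin n)) (t : τ) :
    Set (Finset (Fin n) × Finset (Fin n)) :=
  {YN | Disjoint YN.1 YN.2 ∧ YN.1 ∪ YN.2 ⊆ Q t ∧
    ((YN.1.card ≤ 1 ∧ YN.2 = ∅) ∨ ∃ t', T.Adj t t' ∧ YN.1 ∪ YN.2 = Q t ∩ Q t')}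

/-- Feasibility for the linear system LP-GB (λ-variables are extended by `0` off `F t`). -/
def LPGBFeas {n m : ℕ} {τ : Type} (K : Fin m → Finset (Fin n))
    (Sc : ∀ i : Fin m, Set ({j // j ∈ K i} → Bool))
    (T : SimpleGraph τ) (Q : τ → Finset (Fin n))
    (X : Finset (Fin n) × Finset (Fin n) → ℝ) (lam : τ → (Fin n → Bool) → ℝ) : Prop :=
  (∀ t v, v ∉ Ffeas K Sc Q t → lam t v = 0) ∧
  (∀ t v, 0 ≤ lam t v) ∧
  (∀ t, ∑ v : Fin n → Bool, lam t v = 1) ∧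
  (∀ t, ∀ YN ∈ Omega T Q t,
    X YN = ∑ v : Fin n → Bool,
      lam t v * (∏ j ∈ YN.1, bval (v j)) * (∏ j ∈ YN.2, (1 - bval (v j))))

/-- Feasibility for the linear system LPz (λ-variables are extended by `0` off `F t`). -/
def LPzFeas {n m : ℕ} {τ : Type} (K : Fin m → Finset (Fin n))
    (Sc : ∀ i : Fin m, Set ({j // j ∈ K i} → Bool))
    (T : SimpleGraph τ) (Q : τ → Finset (Fin n))
    (Z : Finset (Fin n) → ℝ) (lam : τ → (Fin n → Bool) → ℝ) : Prop :=
  (∀ t v, v ∉ Ffeas K Sc Q t → lam t v = 0) ∧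
  (∀ t v, 0 ≤ lam t v) ∧
  (∀ t, ∑ v : Fin n → Bool, lam t v = 1) ∧
  (∀ t, ∀ S : Finset (Fin n), S ⊆ Q t →
    Z S = ∑ v ∈ Finset.univ.filter (fun v : Fin n → Bool => ∀ j ∈ S, v j = true), lam t v)


open SimpleGraph

section GraphHelpers

variable {τ : Type}

/-- Inclusion homomorphism from an induced subgraph. -/
def inclHom (T : SimpleGraph τ) (A : Set τ) : T.induce A →g T :=
  ⟨Subtype.val, fun h => h⟩

lemma exists_walk_in_set {T : SimpleGraph τ} {A : Set τ} (hA : (T.induce A).Connected)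
    {a b : τ} (ha : a ∈ A) (hb : b ∈ A) :
    ∃ p : T.Walk a b, p.IsPath ∧ ∀ x ∈ p.support, x ∈ A := by
  classical
  obtain ⟨w⟩ := hA.preconnected ⟨a, ha⟩ ⟨b, hb⟩
  set p := w.map (inclHom T A) with hp
  refine ⟨p.bypass, p.bypass_isPath, fun x hx => ?_⟩
  have hx' := p.support_bypass_subset hx
  rw [hp, SimpleGraph.Walk.support_map] at hx'
  obtain ⟨y, _, rfl⟩ := List.mem_map.mp hx'
  exact y.2

lemma reachable_induce_of_walk {T : SimpleGraph τ} {A : Set τ} :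
    ∀ {a b : τ} (p : T.Walk a b), (∀ x ∈ p.support, x ∈ A) →
    ∀ (ha : a ∈ A) (hb : b ∈ A), (T.induce A).Reachable ⟨a, ha⟩ ⟨b, hb⟩ := by
  intro a b p
  induction p with
  | nil => intro _ ha hb; rfl
  | @cons u v w h q ih =>
    intro hsup ha hb
    have hv : v ∈ A := hsup v (by simp [SimpleGraph.Walk.support_cons,
      SimpleGraph.Walk.start_mem_support])
    have h1 : (T.induce A).Adj ⟨u, ha⟩ ⟨v, hv⟩ := h
    exact h1.reachable.trans (ih (fun x hx => hsup x (by simp [SimpleGraph.Walk.support_cons, hx])) hv hb)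

lemma exists_penultimate {T : SimpleGraph τ} :
    ∀ {a b : τ} (p : T.Walk a b), a ≠ b → ∃ r, T.Adj r b ∧ r ∈ p.support ∧ r ≠ b := by
  intro a b p
  induction p with
  | nil => intro h; exact absurd rfl h
  | @cons u v w h q ih =>
    intro hne
    by_cases hvw : v = w
    · subst hvw
      exact ⟨u, h, by simp [SimpleGraph.Walk.support_cons], hne⟩
    · obtain ⟨r, hr1, hr2, hr3⟩ := ih hvw
      exact ⟨r, hr1, by simp [SimpleGraph.Walk.support_cons, hr2], hr3⟩

lemma path_length_eq_dist {T : SimpleGraph τ} (hT : T.IsTree) {a b : τ}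
    (p : T.Walk a b) (hp : p.IsPath) : p.length = T.dist a b := by
  classical
  obtain ⟨q, hq⟩ := hT.isConnected.exists_walk_length_eq_dist a b
  have heq : (⟨p, hp⟩ : T.Path a b) = ⟨q.bypass, q.bypass_isPath⟩ :=
    hT.IsAcyclic.path_unique _ _
  have hlen : p.length = q.bypass.length := by
    have := congrArg (fun P : T.Path a b => P.1.length) heq
    simpa using this
  have h1 : q.bypass.length ≤ T.dist a b := hq ▸ q.length_bypass_le
  have h2 : T.dist a b ≤ q.bypass.length := SimpleGraph.dist_le _
  omega

lemma exists_leaf [Fintype τ] {T : SimpleGraph τ} (hT : T.IsTree) {U : Set τ}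
    (hconn : (T.induce U).Connected) {a0 b0 : τ} (ha0 : a0 ∈ U) (hb0 : b0 ∈ U)
    (hab : a0 ≠ b0) :
    ∃ t' ∈ U, ∃ t ∈ U, t ≠ t' ∧ T.Adj t t' ∧ (U \ {t'}).Nonempty ∧
      (T.induce (U \ {t'})).Connected ∧ ∀ r ∈ U, r ≠ t' → T.Adj r t' → r = t := by
  classical
  have hUfin : U.Finite := Set.toFinite U
  obtain ⟨t', ht'mem, hmax⟩ := Finset.exists_max_image hUfin.toFinset (fun r => T.dist a0 r)
    ⟨a0, by simpa using ha0⟩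
  rw [Set.Finite.mem_toFinset] at ht'mem
  have hmax' : ∀ r ∈ U, T.dist a0 r ≤ T.dist a0 t' := fun r hr =>
    hmax r (by simpa using hr)
  have ht0t' : a0 ≠ t' := by
    intro h
    have h1 := hmax' b0 hb0
    have h2 := hT.isConnected.pos_dist_of_ne hab
    rw [← h, SimpleGraph.dist_self] at h1
    omega
  -- (*) every vertex of U other than t' is joined to a0 by a path in U avoiding t'
  have star : ∀ w ∈ U, w ≠ t' →
      ∃ p : T.Walk a0 w, (∀ x ∈ p.support, x ∈ U) ∧ t' ∉ p.support := by
    intro w hw hwt'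
    obtain ⟨p, hp, hsub⟩ := exists_walk_in_set hconn ha0 hw
    refine ⟨p, hsub, fun hmem => ?_⟩
    have l1 := path_length_eq_dist hT _ (hp.takeUntil hmem)
    have l2 := path_length_eq_dist hT _ (hp.dropUntil hmem)
    have lp := path_length_eq_dist hT p hp
    have hsplit := congrArg SimpleGraph.Walk.length (p.take_spec hmem)
    rw [SimpleGraph.Walk.length_append] at hsplit
    have hd : 0 < T.dist t' w := hT.isConnected.pos_dist_of_ne (Ne.symm hwt')
    have hle := hmax' w hw
    omega
  have ha0' : a0 ∈ U \ {t'} := ⟨ha0, by simpa using ht0t'⟩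
  have hconn' : (T.induce (U \ {t'})).Connected := by
    rw [SimpleGraph.connected_iff]
    refine ⟨?_, ⟨⟨a0, ha0'⟩⟩⟩
    rintro ⟨a, haU, hat'⟩ ⟨b, hbU, hbt'⟩
    simp only [Set.mem_singleton_iff] at hat' hbt'
    obtain ⟨pa, hpaU, hpat'⟩ := star a haU hat'
    obtain ⟨pb, hpbU, hpbt'⟩ := star b hbU hbt'
    have ra := reachable_induce_of_walk (A := U \ {t'}) pa
      (fun x hx => ⟨hpaU x hx, by simp; rintro rfl; exact hpat' hx⟩) ha0' ⟨haU, by simpa using hat'⟩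
    have rb := reachable_induce_of_walk (A := U \ {t'}) pb
      (fun x hx => ⟨hpbU x hx, by simp; rintro rfl; exact hpbt' hx⟩) ha0' ⟨hbU, by simpa using hbt'⟩
    exact ra.symm.trans rb
  -- the unique neighbor t of t' in U
  obtain ⟨p, hp, hsub⟩ := exists_walk_in_set hconn ha0 ht'mem
  obtain ⟨t, htadj, htsup, htne⟩ := exists_penultimate p ht0t'
  have htU : t ∈ U := hsub t htsup
  refine ⟨t', ht'mem, t, htU, htne, htadj, ⟨a0, ha0'⟩, hconn', ?_⟩
  -- uniqueness
  intro s hsU hst' hsadj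
  by_contra hne
  have hs' : s ∈ U \ {t'} := ⟨hsU, by simpa using hst'⟩
  have ht'' : t ∈ U \ {t'} := ⟨htU, by simpa using htne⟩
  obtain ⟨w⟩ := hconn'.preconnected ⟨s, hs'⟩ ⟨t, ht''⟩
  set w' := w.map (inclHom T (U \ {t'})) with hw'
  have hw'sub : ∀ x ∈ w'.support, x ∈ U \ {t'} := by
    intro x hx
    rw [hw', SimpleGraph.Walk.support_map] at hx
    obtain ⟨y, _, rfl⟩ := List.mem_map.mp hx
    exact y.2
  set q := w'.bypass with hq
  have hqsub : ∀ x ∈ q.support, x ∈ U \ {t'} := fun x hx => hw'sub x (w'.support_bypass_subset hx)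
  have hqt' : t' ∉ q.support := fun hmem => by simpa using (hqsub t' hmem).2
  have hP2 : (SimpleGraph.Walk.cons hsadj.symm q).IsPath := w'.bypass_isPath.cons hqt'
  have hP1 : (SimpleGraph.Walk.cons htadj.symm (SimpleGraph.Walk.nil)).IsPath := by
    simp [SimpleGraph.Walk.isPath_iff_eq_nil]
    exact fun h => htne h.symm
  have hPeq : (⟨SimpleGraph.Walk.cons htadj.symm SimpleGraph.Walk.nil, hP1⟩ : T.Path t' t) =
      ⟨SimpleGraph.Walk.cons hsadj.symm q, hP2⟩ := hT.IsAcyclic.path_unique _ _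
  have hsupp : q.support = [t] := by
    have h := congrArg (fun P : T.Path t' t => P.1.support) hPeq
    have h2 : t' :: q.support = [t', t] := h.symm
    simpa using h2
  have hs_mem : s ∈ q.support := q.start_mem_support
  rw [hsupp] at hs_mem
  simp at hs_mem
  exact hne hs_mem

end GraphHelpers

lemma indic_eq {n : ℕ} (v w : Fin n → Bool) (I : Finset (Fin n)) :
    (∏ j ∈ I.filter (fun j => w j = true), bval (v j)) *
      (∏ j ∈ I.filter (fun j => ¬ w j = true), (1 - bval (v j))) =
    if ∀ j ∈ I, v j = w j then 1 else 0 := by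
  classical
  have h1 : ∀ j : Fin n, bval (v j) = if v j = true then (1:ℝ) else 0 := by
    intro j; cases h : v j <;> simp [bval, h]
  have h2 : ∀ j : Fin n, 1 - bval (v j) = if ¬ v j = true then (1:ℝ) else 0 := by
    intro j; cases h : v j <;> simp [bval, h]
  rw [Finset.prod_congr rfl fun j _ => h1 j, Finset.prod_congr rfl fun j _ => h2 j,
    Finset.prod_boole, Finset.prod_boole]
  by_cases h : ∀ j ∈ I, v j = w j
  · have hA : ∀ j ∈ I.filter (fun j => w j = true), v j = true := by
      intro j hj
      rcases Finset.mem_filter.mp hj with ⟨hjI, hw⟩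
      rw [h j hjI]; exact hw
    have hB : ∀ j ∈ I.filter (fun j => ¬ w j = true), ¬ v j = true := by
      intro j hj
      rcases Finset.mem_filter.mp hj with ⟨hjI, hw⟩
      rw [h j hjI]; exact hw
    rw [if_pos hA, if_pos hB, if_pos h, one_mul]
  · rw [if_neg h]
    push_neg at h
    obtain ⟨j, hjI, hj⟩ := h
    by_cases hwj : w j = true
    · have hni : ¬ ∀ j' ∈ I.filter (fun j => w j = true), v j' = true := by
        intro hall
        exact hj ((hall j (Finset.mem_filter.mpr ⟨hjI, hwj⟩)).trans hwj.symm)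
      rw [if_neg hni, zero_mul]
    · have hwj' : w j = false := by
        cases h' : w j
        · rfl
        · exact absurd h' hwj
      have hvj : v j = true := by
        cases h' : v j
        · exact absurd (h'.trans hwj'.symm) hj
        · rfl
      have hni : ¬ ∀ j' ∈ I.filter (fun j => ¬ w j = true), ¬ v j' = true := by
        intro hall
        exact hall j (Finset.mem_filter.mpr ⟨hjI, hwj⟩) hvj
      rw [if_neg hni, mul_zero]

lemma decomp_ind {n m : ℕ} {τ : Type} [Fintype τ] (K : Fin m → Finset (Fin n))
    (Sc : ∀ i : Fin m, Set ({j // j ∈ K i} → Bool))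
    (T : SimpleGraph τ) (Q : τ → Finset (Fin n))
    (hTD : IsTreeDecomp (interGraph K) T Q)
    (X : Finset (Fin n) × Finset (Fin n) → ℝ) (lam : τ → (Fin n → Bool) → ℝ)
    (hfeas : LPGBFeas K Sc T Q X lam) :
    ∀ (N : ℕ) (U : Set τ), U.ncard ≤ N → U.Nonempty → (T.induce U).Connected →
      ∃ (k : ℕ) (μ : Fin k → ℝ) (x : Fin k → Fin n → Bool),
        1 ≤ k ∧ (∀ ℓ, 0 < μ ℓ ∧ μ ℓ ≤ 1) ∧ (∑ ℓ, μ ℓ) = 1 ∧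
        (∀ ℓ j, (∀ t ∈ U, j ∉ Q t) → x ℓ j = false) ∧
        (∀ ℓ (i : Fin m), (∃ t ∈ U, K i ⊆ Q t) → restr (x ℓ) (K i) ∈ Sc i) ∧
        (∀ t ∈ U, ∀ YN ∈ Omega T Q t, X YN =
          ∑ ℓ, μ ℓ * (∏ j ∈ YN.1, bval (x ℓ j)) * (∏ j ∈ YN.2, (1 - bval (x ℓ j)))) := by
  classical
  obtain ⟨hzero, hnonneg, hsum1, hX⟩ : (∀ t v, v ∉ Ffeas K Sc Q t → lam t v = 0) ∧
      (∀ t v, 0 ≤ lam t v) ∧ (∀ t, ∑ v : Fin n → Bool, lam t v = 1) ∧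
      (∀ t, ∀ YN ∈ Omega T Q t, X YN = ∑ v : Fin n → Bool,
        lam t v * (∏ j ∈ YN.1, bval (v j)) * (∏ j ∈ YN.2, (1 - bval (v j)))) := hfeas
  have hFmem : ∀ t v, lam t v ≠ 0 →
      (∀ j, j ∉ Q t → v j = false) ∧ ∀ i, K i ⊆ Q t → restr v (K i) ∈ Sc i := by
    intro t v hv
    by_contra h
    exact hv (hzero t v (fun hmem => h hmem))
  intro N
  induction N with
  | zero =>
    intro U hle hne _
    have := (Set.ncard_pos (Set.toFinite U)).mpr hne
    omega
  | succ N ih =>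
    intro U hle hne hconn
    by_cases hsing : U.ncard ≤ 1
    · -- base case: U is a singleton {t0}
      obtain ⟨t0, ht0⟩ := hne
      have hU : U = {t0} := by
        apply Set.eq_singleton_iff_unique_mem.mpr
        refine ⟨ht0, fun b hb => ?_⟩
        by_contra hbne
        have := (Set.one_lt_ncard_iff (Set.toFinite U)).mpr ⟨b, t0, hb, ht0, hbne⟩
        omega
      set s : Finset (Fin n → Bool) := Finset.univ.filter (fun v => lam t0 v ≠ 0) with hs
      have hmem_s : ∀ v, v ∈ s ↔ lam t0 v ≠ 0 := by
        intro v; rw [hs, Finset.mem_filter]; simp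
      have hsne : s.Nonempty := by
        have h10 : ∑ v : Fin n → Bool, lam t0 v ≠ 0 := by rw [hsum1 t0]; norm_num
        obtain ⟨v, _, hv⟩ := Finset.exists_ne_zero_of_sum_ne_zero h10
        exact ⟨v, (hmem_s v).mpr hv⟩
      set k := s.card with hk
      have hk1 : 1 ≤ k := Finset.card_pos.mpr hsne
      set e := s.equivFin with he
      set x : Fin k → Fin n → Bool := fun ℓ => ((e.symm ℓ : {v // v ∈ s}) : Fin n → Bool)
        with hxdef
      have hxm : ∀ ℓ, lam t0 (x ℓ) ≠ 0 := fun ℓ => (hmem_s _).mp (e.symm ℓ).2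
      have sum_eq : ∀ g : (Fin n → Bool) → ℝ, ∑ ℓ : Fin k, g (x ℓ) = ∑ v ∈ s, g v := by
        intro g
        calc ∑ ℓ : Fin k, g (x ℓ) = ∑ a : {v // v ∈ s}, g ↑a :=
              Equiv.sum_comp e.symm (fun a : {v // v ∈ s} => g ↑a)
          _ = ∑ v ∈ s, g v := Finset.sum_coe_sort s g
      have sum_ext : ∀ f : (Fin n → Bool) → ℝ, (∀ v, lam t0 v = 0 → f v = 0) →
          ∑ v ∈ s, f v = ∑ v : Fin n → Bool, f v := by
        intro f hf
        apply Finset.sum_subset (Finset.subset_univ s)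
        intro v _ hvs
        apply hf
        by_contra h0
        exact hvs ((hmem_s v).mpr h0)
      refine ⟨k, fun ℓ => lam t0 (x ℓ), x, hk1, ?_, ?_, ?_, ?_, ?_⟩
      · intro ℓ
        constructor
        · exact lt_of_le_of_ne (hnonneg t0 (x ℓ)) (Ne.symm (hxm ℓ))
        · calc lam t0 (x ℓ) ≤ ∑ v : Fin n → Bool, lam t0 v :=
                Finset.single_le_sum (fun v _ => hnonneg t0 v) (Finset.mem_univ _)
            _ = 1 := hsum1 t0
      · rw [sum_eq (lam t0), sum_ext (lam t0) (fun v h => h)]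
        exact hsum1 t0
      · intro ℓ j hj
        exact (hFmem t0 (x ℓ) (hxm ℓ)).1 j (hj t0 (by rw [hU]; rfl))
      · rintro ℓ i ⟨t1, ht1, hKi⟩
        rw [hU, Set.mem_singleton_iff] at ht1
        rw [ht1] at hKi
        exact (hFmem t0 (x ℓ) (hxm ℓ)).2 i hKi
      · intro t1 ht1 YN hYN
        rw [hU, Set.mem_singleton_iff] at ht1
        rw [ht1] at hYN
        rw [hX t0 YN hYN]
        rw [← sum_ext (fun v => lam t0 v * (∏ j ∈ YN.1, bval (v j)) *
            (∏ j ∈ YN.2, (1 - bval (v j)))) (fun v h => by simp only [h, zero_mul])]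
        exact (sum_eq _).symm
    · -- inductive step: U has at least two vertices
      push_neg at hsing
      obtain ⟨a0, b0, ha0, hb0, hab⟩ := (Set.one_lt_ncard_iff (Set.toFinite U)).mp hsing
      obtain ⟨t', ht'U, t, htU, htne, htadj, hU'ne, hU'conn, huniq⟩ :=
        exists_leaf hTD.1 hconn ha0 hb0 hab
      have hcard' : (U \ {t'}).ncard ≤ N := by
        have h1 : (U \ {t'}).ncard = U.ncard - 1 :=
          Set.ncard_diff_singleton_of_mem ht'U
        omega
      have htU' : t ∈ U \ {t'} := ⟨htU, by simpa using htne⟩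
      obtain ⟨k, μ, x, hk1, hμ01, hμsum, hx4, hx5, hx6⟩ := ih (U \ {t'}) hcard' hU'ne hU'conn
      set I := Q t ∩ Q t' with hIdef
      have hpatΩ : ∀ w : Fin n → Bool,
          ((I.filter (fun j => w j = true), I.filter (fun j => ¬ w j = true)) ∈ Omega T Q t) ∧
          ((I.filter (fun j => w j = true), I.filter (fun j => ¬ w j = true)) ∈ Omega T Q t') := by
        intro w
        have hdisj : Disjoint (I.filter (fun j => w j = true)) (I.filter (fun j => ¬ w j = true)) :=
          Finset.disjoint_filter_filter_not I I _
        have hunion : I.filter (fun j => w j = true) ∪ I.filter (fun j => ¬ w j = true) = I :=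
          Finset.filter_union_filter_not_eq _ I
        constructor
        · simp only [Omega, Set.mem_setOf_eq]
          exact ⟨hdisj, by rw [hunion, hIdef]; exact Finset.inter_subset_left,
            Or.inr ⟨t', htadj, hunion.trans hIdef⟩⟩
        · simp only [Omega, Set.mem_setOf_eq]
          exact ⟨hdisj, by rw [hunion, hIdef]; exact Finset.inter_subset_right,
            Or.inr ⟨t, htadj.symm, hunion.trans (hIdef.trans (Finset.inter_comm _ _))⟩⟩
      set Cf : (Fin n → Bool) → ℝ := fun w =>
        X (I.filter (fun j => w j = true), I.filter (fun j => ¬ w j = true)) with hCf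
      have hct' : ∀ w : Fin n → Bool,
          Cf w = ∑ v : Fin n → Bool, if (∀ j ∈ I, v j = w j) then lam t' v else 0 := by
        intro w
        rw [hCf]
        dsimp only
        rw [hX t' _ (hpatΩ w).2]
        refine Finset.sum_congr rfl fun v _ => ?_
        dsimp only
        rw [mul_assoc, indic_eq v w I, mul_ite, mul_one, mul_zero]
      have hct : ∀ w : Fin n → Bool,
          Cf w = ∑ ℓ : Fin k, if (∀ j ∈ I, x ℓ j = w j) then μ ℓ else 0 := by
        intro w
        rw [hCf]
        dsimp only
        rw [hx6 t htU' _ (hpatΩ w).1]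
        refine Finset.sum_congr rfl fun ℓ _ => ?_
        dsimp only
        rw [mul_assoc, indic_eq (x ℓ) w I, mul_ite, mul_one, mul_zero]
      have hCfeq : ∀ (w v : Fin n → Bool), (∀ j ∈ I, v j = w j) → Cf w = Cf v := by
        intro w v h
        have h1 : I.filter (fun j => w j = true) = I.filter (fun j => v j = true) :=
          (Finset.filter_congr fun j hj => by rw [h j hj]).symm
        have h2 : I.filter (fun j => ¬ w j = true) = I.filter (fun j => ¬ v j = true) :=
          (Finset.filter_congr fun j hj => by rw [h j hj]).symm
        rw [hCf]
        dsimp only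
        rw [h1, h2]
      have hCpos : ∀ ℓ, 0 < Cf (x ℓ) := by
        intro ℓ
        have h1 : μ ℓ ≤ Cf (x ℓ) := by
          rw [hct (x ℓ)]
          have h2 := Finset.single_le_sum
            (f := fun ℓ' => if (∀ j ∈ I, x ℓ' j = x ℓ j) then μ ℓ' else 0)
            (fun ℓ' _ => by
              split
              · exact (hμ01 ℓ').1.le
              · exact le_rfl) (Finset.mem_univ ℓ)
          simpa using h2
        exact lt_of_lt_of_le (hμ01 ℓ).1 h1
      set E : Finset (Fin k × (Fin n → Bool)) := Finset.univ.filter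
        (fun q => lam t' q.2 ≠ 0 ∧ ∀ j ∈ I, q.2 j = x q.1 j) with hEdef
      have hmem_E : ∀ q : Fin k × (Fin n → Bool),
          q ∈ E ↔ lam t' q.2 ≠ 0 ∧ ∀ j ∈ I, q.2 j = x q.1 j := by
        intro q; rw [hEdef, Finset.mem_filter]; simp
      have hEne : E.Nonempty := by
        have hc0 : Cf (x ⟨0, hk1⟩) ≠ 0 := ne_of_gt (hCpos ⟨0, hk1⟩)
        rw [hct' (x ⟨0, hk1⟩)] at hc0
        obtain ⟨v, _, hv⟩ := Finset.exists_ne_zero_of_sum_ne_zero hc0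
        by_cases hcnd : ∀ j ∈ I, v j = x ⟨0, hk1⟩ j
        · rw [if_pos hcnd] at hv
          exact ⟨(⟨0, hk1⟩, v), (hmem_E _).mpr ⟨hv, hcnd⟩⟩
        · rw [if_neg hcnd] at hv
          exact absurd rfl hv
      set k' := E.card with hk'def
      have hk'1 : 1 ≤ k' := Finset.card_pos.mpr hEne
      set e' := E.equivFin with he'
      set idx : Fin k' → Fin k × (Fin n → Bool) :=
        fun r => ((e'.symm r : {q // q ∈ E}) : Fin k × (Fin n → Bool)) with hidxdef
      have hidxP : ∀ r, lam t' (idx r).2 ≠ 0 ∧ ∀ j ∈ I, (idx r).2 j = x (idx r).1 j :=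
        fun r => (hmem_E _).mp (e'.symm r).2
      have sum_idx : ∀ g : Fin k × (Fin n → Bool) → ℝ,
          ∑ r : Fin k', g (idx r) = ∑ q ∈ E, g q := by
        intro g
        calc ∑ r : Fin k', g (idx r) = ∑ a : {q // q ∈ E}, g ↑a :=
              Equiv.sum_comp e'.symm (fun a : {q // q ∈ E} => g ↑a)
          _ = ∑ q ∈ E, g q := Finset.sum_coe_sort E g
      have sum_E : ∀ g : Fin k × (Fin n → Bool) → ℝ, ∑ q ∈ E, g q =
          ∑ ℓ : Fin k, ∑ v : Fin n → Bool,
            if lam t' v ≠ 0 ∧ (∀ j ∈ I, v j = x ℓ j) then g (ℓ, v) else 0 := by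
        intro g
        rw [hEdef, Finset.sum_filter, Fintype.sum_prod_type]
      have hFf : ∀ r, (∀ j, j ∉ Q t' → (idx r).2 j = false) ∧
          ∀ i, K i ⊆ Q t' → restr ((idx r).2) (K i) ∈ Sc i :=
        fun r => hFmem t' _ (hidxP r).1
      have hsep : ∀ j : Fin n, j ∈ Q t' → (∃ sv ∈ U \ {t'}, j ∈ Q sv) → j ∈ Q t := by
        rintro j hjt' ⟨sv, hsvU', hjs⟩
        have hsvU : sv ∈ U := hsvU'.1
        have hsvne : sv ≠ t' := by have := hsvU'.2; simpa using this
        obtain ⟨p1, hp1, hsub1⟩ := exists_walk_in_set (hTD.2.1 j)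
          (show sv ∈ {r | j ∈ Q r} from hjs) (show t' ∈ {r | j ∈ Q r} from hjt')
        obtain ⟨p2, hp2, hsub2⟩ := exists_walk_in_set hconn hsvU ht'U
        have hpeq : (⟨p1, hp1⟩ : T.Path sv t') = ⟨p2, hp2⟩ := hTD.1.IsAcyclic.path_unique _ _
        have hs' : p1.support = p2.support := by
          have := congrArg (fun P : T.Path sv t' => P.1.support) hpeq
          simpa using this
        obtain ⟨r, hradj, hrsup, hrne⟩ := exists_penultimate p1 hsvne
        have hrU : r ∈ U := hsub2 r (hs' ▸ hrsup)
        have hrt : r = t := huniq r hrU hrne hradj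
        have hjr : j ∈ Q r := hsub1 r hrsup
        rwa [hrt] at hjr
      have hAgr1 : ∀ r j, (∃ sv ∈ U \ {t'}, j ∈ Q sv) →
          (x (idx r).1 j || (idx r).2 j) = x (idx r).1 j := by
        intro r j hj
        by_cases hjt' : j ∈ Q t'
        · have hjI : j ∈ I := by rw [hIdef]; exact Finset.mem_inter.mpr ⟨hsep j hjt' hj, hjt'⟩
          rw [(hidxP r).2 j hjI, Bool.or_self]
        · rw [(hFf r).1 j hjt', Bool.or_false]
      have hAgr2 : ∀ r j, j ∈ Q t' → (x (idx r).1 j || (idx r).2 j) = (idx r).2 j := by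
        intro r j hjt'
        by_cases hj : ∃ sv ∈ U \ {t'}, j ∈ Q sv
        · have hjI : j ∈ I := by rw [hIdef]; exact Finset.mem_inter.mpr ⟨hsep j hjt' hj, hjt'⟩
          rw [(hidxP r).2 j hjI, Bool.or_self]
        · push_neg at hj
          rw [hx4 (idx r).1 j hj, Bool.false_or]
      have engine1 : ∀ A : Fin k → ℝ,
          ∑ r : Fin k', μ (idx r).1 * lam t' (idx r).2 / Cf (x (idx r).1) * A (idx r).1 =
          ∑ ℓ : Fin k, μ ℓ * A ℓ := by
        intro A
        have h0 : ∑ r : Fin k', μ (idx r).1 * lam t' (idx r).2 / Cf (x (idx r).1) * A (idx r).1 =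
            ∑ q ∈ E, μ q.1 * lam t' q.2 / Cf (x q.1) * A q.1 :=
          sum_idx (fun q => μ q.1 * lam t' q.2 / Cf (x q.1) * A q.1)
        rw [h0, sum_E (fun q => μ q.1 * lam t' q.2 / Cf (x q.1) * A q.1)]
        refine Finset.sum_congr rfl fun ℓ _ => ?_
        have step : ∀ v : Fin n → Bool,
            (if lam t' v ≠ 0 ∧ (∀ j ∈ I, v j = x ℓ j)
              then μ ℓ * lam t' v / Cf (x ℓ) * A ℓ else 0) =
            (if (∀ j ∈ I, v j = x ℓ j) then lam t' v else 0) * (μ ℓ / Cf (x ℓ) * A ℓ) := by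
          intro v
          by_cases h1 : ∀ j ∈ I, v j = x ℓ j
          · by_cases h2 : lam t' v = 0
            · rw [if_neg (by tauto), if_pos h1, h2, zero_mul]
            · rw [if_pos ⟨h2, h1⟩, if_pos h1]; ring
          · rw [if_neg (by tauto), if_neg h1, zero_mul]
        rw [Finset.sum_congr rfl fun v _ => step v, ← Finset.sum_mul, ← hct' (x ℓ)]
        have hc0 : Cf (x ℓ) ≠ 0 := ne_of_gt (hCpos ℓ)
        field_simp
      have engine2 : ∀ B : (Fin n → Bool) → ℝ,
          ∑ r : Fin k', μ (idx r).1 * lam t' (idx r).2 / Cf (x (idx r).1) * B ((idx r).2) =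
          ∑ v : Fin n → Bool, lam t' v * B v := by
        intro B
        have h0 : ∑ r : Fin k', μ (idx r).1 * lam t' (idx r).2 / Cf (x (idx r).1) * B ((idx r).2) =
            ∑ q ∈ E, μ q.1 * lam t' q.2 / Cf (x q.1) * B q.2 :=
          sum_idx (fun q => μ q.1 * lam t' q.2 / Cf (x q.1) * B q.2)
        rw [h0, sum_E (fun q => μ q.1 * lam t' q.2 / Cf (x q.1) * B q.2), Finset.sum_comm]
        refine Finset.sum_congr rfl fun v _ => ?_
        by_cases hv : lam t' v = 0
        · simp [hv]
        · have hCvpos : 0 < Cf v := by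
            rw [hct' v]
            have h1 := Finset.single_le_sum
              (f := fun v' => if (∀ j ∈ I, v' j = v j) then lam t' v' else 0)
              (fun v' _ => by
                split
                · exact hnonneg t' v'
                · exact le_rfl) (Finset.mem_univ v)
            simp at h1
            exact lt_of_lt_of_le (lt_of_le_of_ne (hnonneg t' v) (Ne.symm hv)) h1
          have step : ∀ ℓ : Fin k,
              (if lam t' v ≠ 0 ∧ (∀ j ∈ I, v j = x ℓ j)
                then μ ℓ * lam t' v / Cf (x ℓ) * B v else 0) =
              (if (∀ j ∈ I, x ℓ j = v j) then μ ℓ else 0) * (lam t' v / Cf v * B v) := by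
            intro ℓ
            by_cases h1 : ∀ j ∈ I, v j = x ℓ j
            · have h1' : ∀ j ∈ I, x ℓ j = v j := fun j hj => (h1 j hj).symm
              have hcC : Cf (x ℓ) = Cf v := hCfeq (x ℓ) v h1
              rw [if_pos ⟨hv, h1⟩, if_pos h1', hcC]; ring
            · have h1' : ¬ ∀ j ∈ I, x ℓ j = v j := fun hh => h1 fun j hj => (hh j hj).symm
              rw [if_neg (by tauto), if_neg h1', zero_mul]
          rw [Finset.sum_congr rfl fun ℓ _ => step ℓ, ← Finset.sum_mul, ← hct v]
          have hC0 : Cf v ≠ 0 := ne_of_gt hCvpos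
          field_simp
      have hsum' : ∑ r : Fin k', μ (idx r).1 * lam t' (idx r).2 / Cf (x (idx r).1) = 1 := by
        have h : ∑ r : Fin k', μ (idx r).1 * lam t' (idx r).2 / Cf (x (idx r).1) * 1 =
            ∑ ℓ : Fin k, μ ℓ * 1 := engine1 (fun _ => (1:ℝ))
        simp only [mul_one] at h
        rw [h, hμsum]
      have hpos' : ∀ r : Fin k', 0 < μ (idx r).1 * lam t' (idx r).2 / Cf (x (idx r).1) := by
        intro r
        apply div_pos
        · exact mul_pos (hμ01 (idx r).1).1
            (lt_of_le_of_ne (hnonneg t' _) (Ne.symm (hidxP r).1))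
        · exact hCpos (idx r).1
      refine ⟨k', fun r => μ (idx r).1 * lam t' (idx r).2 / Cf (x (idx r).1),
        fun r j => x (idx r).1 j || (idx r).2 j, hk'1, ?_, hsum', ?_, ?_, ?_⟩
      · intro r
        refine ⟨hpos' r, ?_⟩
        calc μ (idx r).1 * lam t' (idx r).2 / Cf (x (idx r).1)
            ≤ ∑ r' : Fin k', μ (idx r').1 * lam t' (idx r').2 / Cf (x (idx r').1) :=
              Finset.single_le_sum (fun r' _ => (hpos' r').le) (Finset.mem_univ r)
          _ = 1 := hsum'
      · intro r j hj
        show (x (idx r).1 j || (idx r).2 j) = false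
        have h1 : x (idx r).1 j = false := hx4 (idx r).1 j (fun sv hsv => hj sv hsv.1)
        have h2 : (idx r).2 j = false := (hFf r).1 j (hj t' ht'U)
        rw [h1, h2, Bool.or_self]
      · rintro r i ⟨sv, hsvU, hKi⟩
        show restr (fun j => x (idx r).1 j || (idx r).2 j) (K i) ∈ Sc i
        by_cases hsv : sv = t'
        · have hKi' : K i ⊆ Q t' := hsv ▸ hKi
          have hres : restr (fun j => x (idx r).1 j || (idx r).2 j) (K i) =
              restr ((idx r).2) (K i) := by
            funext jj
            exact hAgr2 r jj.1 (hKi' jj.2)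
          rw [hres]
          exact (hFf r).2 i hKi'
        · have hsv' : sv ∈ U \ {t'} := ⟨hsvU, by simpa using hsv⟩
          have hres : restr (fun j => x (idx r).1 j || (idx r).2 j) (K i) =
              restr (x (idx r).1) (K i) := by
            funext jj
            exact hAgr1 r jj.1 ⟨sv, hsv', hKi jj.2⟩
          rw [hres]
          exact hx5 (idx r).1 i ⟨sv, hsv', hKi⟩
      · intro sv hsvU YN hYN
        have hYNc := hYN
        simp only [Omega, Set.mem_setOf_eq] at hYNc
        obtain ⟨-, hQsub, -⟩ := hYNc
        by_cases hsv : sv = t'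
        · have hYN' : YN ∈ Omega T Q t' := hsv ▸ hYN
          have hQsub' : YN.1 ∪ YN.2 ⊆ Q t' := hsv ▸ hQsub
          have hB : ∑ r : Fin k', μ (idx r).1 * lam t' (idx r).2 / Cf (x (idx r).1) *
                ((∏ j ∈ YN.1, bval ((idx r).2 j)) * (∏ j ∈ YN.2, (1 - bval ((idx r).2 j)))) =
              ∑ v : Fin n → Bool, lam t' v *
                ((∏ j ∈ YN.1, bval (v j)) * (∏ j ∈ YN.2, (1 - bval (v j)))) :=
            engine2 (fun v => (∏ j ∈ YN.1, bval (v j)) * (∏ j ∈ YN.2, (1 - bval (v j))))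
          calc X YN = ∑ v : Fin n → Bool, lam t' v *
                ((∏ j ∈ YN.1, bval (v j)) * (∏ j ∈ YN.2, (1 - bval (v j)))) := by
                rw [hX t' YN hYN']
                exact Finset.sum_congr rfl fun v _ => mul_assoc _ _ _
            _ = ∑ r : Fin k', μ (idx r).1 * lam t' (idx r).2 / Cf (x (idx r).1) *
                ((∏ j ∈ YN.1, bval ((idx r).2 j)) * (∏ j ∈ YN.2, (1 - bval ((idx r).2 j)))) :=
              hB.symm
            _ = ∑ r : Fin k', μ (idx r).1 * lam t' (idx r).2 / Cf (x (idx r).1) *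
                (∏ j ∈ YN.1, bval (x (idx r).1 j || (idx r).2 j)) *
                (∏ j ∈ YN.2, (1 - bval (x (idx r).1 j || (idx r).2 j))) := by
              refine Finset.sum_congr rfl fun r _ => ?_
              have e1 : (∏ j ∈ YN.1, bval (x (idx r).1 j || (idx r).2 j)) =
                  ∏ j ∈ YN.1, bval ((idx r).2 j) :=
                Finset.prod_congr rfl fun j hj => by
                  rw [hAgr2 r j (hQsub' (Finset.mem_union_left _ hj))]
              have e2 : (∏ j ∈ YN.2, (1 - bval (x (idx r).1 j || (idx r).2 j))) =
                  ∏ j ∈ YN.2, (1 - bval ((idx r).2 j)) :=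
                Finset.prod_congr rfl fun j hj => by
                  rw [hAgr2 r j (hQsub' (Finset.mem_union_right _ hj))]
              rw [e1, e2]
              ring
        · have hsv' : sv ∈ U \ {t'} := ⟨hsvU, by simpa using hsv⟩
          have hA : ∑ r : Fin k', μ (idx r).1 * lam t' (idx r).2 / Cf (x (idx r).1) *
                ((∏ j ∈ YN.1, bval (x (idx r).1 j)) * (∏ j ∈ YN.2, (1 - bval (x (idx r).1 j)))) =
              ∑ ℓ : Fin k, μ ℓ *
                ((∏ j ∈ YN.1, bval (x ℓ j)) * (∏ j ∈ YN.2, (1 - bval (x ℓ j)))) :=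
            engine1 (fun ℓ => (∏ j ∈ YN.1, bval (x ℓ j)) * (∏ j ∈ YN.2, (1 - bval (x ℓ j))))
          calc X YN = ∑ ℓ : Fin k, μ ℓ * (∏ j ∈ YN.1, bval (x ℓ j)) *
                (∏ j ∈ YN.2, (1 - bval (x ℓ j))) := hx6 sv hsv' YN hYN
            _ = ∑ ℓ : Fin k, μ ℓ *
                ((∏ j ∈ YN.1, bval (x ℓ j)) * (∏ j ∈ YN.2, (1 - bval (x ℓ j)))) :=
              Finset.sum_congr rfl fun ℓ _ => mul_assoc _ _ _
            _ = ∑ r : Fin k', μ (idx r).1 * lam t' (idx r).2 / Cf (x (idx r).1) *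
                ((∏ j ∈ YN.1, bval (x (idx r).1 j)) * (∏ j ∈ YN.2, (1 - bval (x (idx r).1 j)))) :=
              hA.symm
            _ = ∑ r : Fin k', μ (idx r).1 * lam t' (idx r).2 / Cf (x (idx r).1) *
                (∏ j ∈ YN.1, bval (x (idx r).1 j || (idx r).2 j)) *
                (∏ j ∈ YN.2, (1 - bval (x (idx r).1 j || (idx r).2 j))) := by
              refine Finset.sum_congr rfl fun r _ => ?_
              have e1 : (∏ j ∈ YN.1, bval (x (idx r).1 j || (idx r).2 j)) =
                  ∏ j ∈ YN.1, bval (x (idx r).1 j) :=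
                Finset.prod_congr rfl fun j hj => by
                  rw [hAgr1 r j ⟨sv, hsv', hQsub (Finset.mem_union_left _ hj)⟩]
              have e2 : (∏ j ∈ YN.2, (1 - bval (x (idx r).1 j || (idx r).2 j))) =
                  ∏ j ∈ YN.2, (1 - bval (x (idx r).1 j)) :=
                Finset.prod_congr rfl fun j hj => by
                  rw [hAgr1 r j ⟨sv, hsv', hQsub (Finset.mem_union_right _ hj)⟩]
              rw [e1, e2]
              ring


theorem decomposition_over_subtree
    {n m : ℕ} {τ : Type} [Fintype τ] (K : Fin m → Finset (Fin n))
    (Sc : ∀ i : Fin m, Set ({j // j ∈ K i} → Bool))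
    (T : SimpleGraph τ) (Q : τ → Finset (Fin n))
    (hTD : IsTreeDecomp (interGraph K) T Q)
    (X : Finset (Fin n) × Finset (Fin n) → ℝ) (lam : τ → (Fin n → Bool) → ℝ)
    (hfeas : LPGBFeas K Sc T Q X lam)
    (U : Set τ) (hUne : U.Nonempty) (hU : (T.induce U).Connected) :
    ∃ (k : ℕ) (μ : Fin k → ℝ) (x : Fin k → Fin n → Bool),
      1 ≤ k ∧
      (∀ ℓ, 0 < μ ℓ ∧ μ ℓ ≤ 1) ∧
      (∑ ℓ, μ ℓ) = 1 ∧
      (∀ ℓ j, (∀ t ∈ U, j ∉ Q t) → x ℓ j = false) ∧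
      (∀ ℓ (i : Fin m), (∃ t ∈ U, K i ⊆ Q t) → restr (x ℓ) (K i) ∈ Sc i) ∧
      (∀ t ∈ U, ∀ YN ∈ Omega T Q t,
        X YN = ∑ ℓ, μ ℓ * (∏ j ∈ YN.1, bval (x ℓ j)) * (∏ j ∈ YN.2, (1 - bval (x ℓ j)))) := by
  exact decomp_ind K Sc T Q hTD X lam hfeas U.ncard U le_rfl hUne hU
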